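/- Let N ≥ 2 and k ≥ 1 be integers, a, b nonnegative integers, and let λ₁, …, λ_N be pairwise distinct complex numbers. Let R > 0 satisfy R > 3·max_j |λ_j|. Then (1/(2πi))²·∮_{|x₂|=5R} ∮_{|x₁|=R} e(k,1;x₁,x₂)·(x₁−x₂)²·w_a(x₁,x₂)·w_b(x₁,x₂) / ∏_{j=1}^{N} ( (x₁−λ_j)(x₂−λ_j) ) dx₁ dx₂ = Σ_{i≠j} E(k,1;i,j)·(λ_i−λ_j)²·w_a(λ_i,λ_j)·w_b(λ_i,λ_j) / ( V(N;i)·V(N;j) ), where the sum runs over ordered pairs (i,j) with 1 ≤ i,j ≤ N, i ≠ j. -/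

import Mathlib

/-- `e(k,d;u,v) := ∏_{m=0}^{kd} (m·u + (kd−m)·v)/d`. -/
noncomputable def eFun (k d : ℕ) (u v : ℂ) : ℂ :=
  ∏ m ∈ Finset.range (k * d + 1), (((m : ℂ) * u + ((k * d - m : ℕ) : ℂ) * v) / (d : ℂ))

/-- `w_a(u,v) := Σ_{p+q=a−1, p,q≥0} u^p v^q`. -/
def wPair {R : Type*} [CommRing R] (a : ℕ) (u v : R) : R :=
  ∑ p ∈ Finset.range a, u ^ p * v ^ (a - 1 - p)

/-- `V(N;i) := ∏_{j≠i} (λ_j − λ_i)`. -/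
noncomputable def Vfun {N : ℕ} (lam : Fin N → ℂ) (i : Fin N) : ℂ :=
  ∏ j ∈ Finset.univ.erase i, (lam j - lam i)

/-- The double contour integral computing the `d = 1` Kontsevich localization sum:
`(1/(2πi))²·∮_{|x₂|=5R} ∮_{|x₁|=R} e(k,1;x₁,x₂)(x₁−x₂)² w_a w_b / ∏_j (x₁−λ_j)(x₂−λ_j)`
equals `Σ_{i≠j} E(k,1;i,j)(λ_i−λ_j)² w_a(λ_i,λ_j) w_b(λ_i,λ_j)/(V(N;i)V(N;j))`. -/
noncomputable def Pfun (k a b : ℕ) (x y : ℂ) : ℂ :=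
  eFun k 1 x y * (x - y) ^ 2 * wPair a x y * wPair b x y

lemma Pfun_diff_left (k a b : ℕ) (y : ℂ) : Differentiable ℂ (fun x => Pfun k a b x y) := by
  unfold Pfun eFun wPair; fun_prop

lemma Pfun_diff_right (k a b : ℕ) (x : ℂ) : Differentiable ℂ (fun y => Pfun k a b x y) := by
  unfold Pfun eFun wPair; fun_prop

lemma myCircleIntegral_finset_sum {ι : Type*} (s : Finset ι) (f : ι → ℂ → ℂ) (c : ℂ) (r : ℝ)
    (h : ∀ i ∈ s, CircleIntegrable (f i) c r) :
    (∮ z in C(c, r), ∑ i ∈ s, f i z) = ∑ i ∈ s, ∮ z in C(c, r), f i z := by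
  simp only [circleIntegral, Finset.smul_sum]
  exact intervalIntegral.integral_finset_sum fun i hi => (h i hi).out

lemma partial_fractions {N : ℕ} (hN : 0 < N) (lam : Fin N → ℂ) (hdist : Function.Injective lam)
    (x : ℂ) (hx : ∀ j, x ≠ lam j) :
    (∏ j, (x - lam j))⁻¹ =
      ∑ i, (∏ j ∈ Finset.univ.erase i, (lam i - lam j))⁻¹ * (x - lam i)⁻¹ := by
  have hne : ∀ j, x - lam j ≠ 0 := fun j => sub_ne_zero.mpr (hx j)
  have hV : ∀ i : Fin N, (∏ j ∈ Finset.univ.erase i, (lam i - lam j)) ≠ 0 := by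
    intro i
    refine Finset.prod_ne_zero_iff.mpr fun j hj => sub_ne_zero.mpr fun h => ?_
    exact (Finset.mem_erase.mp hj).1 (hdist h.symm)
  have h1 : ∑ i : Fin N, Polynomial.eval x (Lagrange.basis Finset.univ lam i) = 1 := by
    rw [← Polynomial.eval_finset_sum,
      Lagrange.sum_basis hdist.injOn ⟨⟨0, hN⟩, Finset.mem_univ _⟩, Polynomial.eval_one]
  have h2 : ∀ i : Fin N, Polynomial.eval x (Lagrange.basis Finset.univ lam i)
      = (∏ j ∈ Finset.univ.erase i, (lam i - lam j))⁻¹ *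
        ∏ j ∈ Finset.univ.erase i, (x - lam j) := by
    intro i
    rw [Lagrange.basis, Polynomial.eval_prod, ← Finset.prod_inv_distrib, ← Finset.prod_mul_distrib]
    exact Finset.prod_congr rfl fun j _ => by simp [Lagrange.basisDivisor]
  have hprod : ∀ i : Fin N,
      (∏ j, (x - lam j)) = (x - lam i) * ∏ j ∈ Finset.univ.erase i, (x - lam j) :=
    fun i => (Finset.mul_prod_erase Finset.univ _ (Finset.mem_univ i)).symm
  have hE : ∀ i : Fin N, (∏ j ∈ Finset.univ.erase i, (x - lam j)) ≠ 0 :=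
    fun i => Finset.prod_ne_zero_iff.mpr fun j _ => hne j
  calc (∏ j, (x - lam j))⁻¹
      = (∑ i, Polynomial.eval x (Lagrange.basis Finset.univ lam i)) * (∏ j, (x - lam j))⁻¹ := by
        rw [h1, one_mul]
    _ = ∑ i, (∏ j ∈ Finset.univ.erase i, (lam i - lam j))⁻¹ * (x - lam i)⁻¹ := by
        rw [Finset.sum_mul]
        refine Finset.sum_congr rfl fun i _ => ?_
        rw [h2 i, hprod i]
        field_simp [hV i, hE i, hne i]

set_option maxHeartbeats 2000000 in
theorem stmt14 (N k : ℕ) (hN : 2 ≤ N) (hk : 1 ≤ k) (a b : ℕ)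
    (lam : Fin N → ℂ) (hdist : Function.Injective lam)
    (R : ℝ) (hR : 0 < R) (hR3 : ∀ j, 3 * ‖lam j‖ < R) :
    (1 / (2 * (Real.pi : ℂ) * Complex.I)) ^ 2 *
      (∮ x₂ in C(0, 5 * R), ∮ x₁ in C(0, R),
        eFun k 1 x₁ x₂ * (x₁ - x₂) ^ 2 * wPair a x₁ x₂ * wPair b x₁ x₂ /
          ∏ j, ((x₁ - lam j) * (x₂ - lam j))) =
    ∑ i, ∑ j ∈ Finset.univ.erase i,
      eFun k 1 (lam i) (lam j) * (lam i - lam j) ^ 2 *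
        wPair a (lam i) (lam j) * wPair b (lam i) (lam j) /
        (Vfun lam i * Vfun lam j) := by
  have hNpos : 0 < N := by omega
  show (1 / (2 * (Real.pi : ℂ) * Complex.I)) ^ 2 *
      (∮ x₂ in C(0, 5 * R), ∮ x₁ in C(0, R),
        Pfun k a b x₁ x₂ / ∏ j, ((x₁ - lam j) * (x₂ - lam j))) =
    ∑ i, ∑ j ∈ Finset.univ.erase i,
      Pfun k a b (lam i) (lam j) / (Vfun lam i * Vfun lam j)
  set K : Fin N → ℂ := fun i => (∏ j ∈ Finset.univ.erase i, (lam i - lam j))⁻¹ with hKdef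
  have habs : ∀ j, ‖lam j‖ < R := by
    intro j; have := hR3 j; have h0 := norm_nonneg (lam j); linarith
  have habs5 : ∀ j, ‖lam j‖ < 5 * R := by
    intro j; have := habs j; linarith
  have hball : ∀ i, lam i ∈ Metric.ball (0 : ℂ) R := by
    intro i; rw [mem_ball_zero_iff]; exact habs i
  have hball5 : ∀ i, lam i ∈ Metric.ball (0 : ℂ) (5 * R) := by
    intro i; rw [mem_ball_zero_iff]; exact habs5 i
  have hsphere_ne : ∀ (r : ℝ), (∀ j, ‖lam j‖ < r) →
      ∀ x ∈ Metric.sphere (0 : ℂ) r, ∀ j, x ≠ lam j := by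
    intro r hr x hx j h
    rw [mem_sphere_zero_iff_norm] at hx
    rw [h] at hx
    exact absurd hx (ne_of_lt (hr j))
  -- inner integral evaluation
  have hInner : ∀ x₂ ∈ Metric.sphere (0 : ℂ) (5 * R),
      (∮ x₁ in C(0, R), Pfun k a b x₁ x₂ / ∏ j, ((x₁ - lam j) * (x₂ - lam j)))
      = ∑ i, (2 * (Real.pi : ℂ) * Complex.I) *
          (K i * (Pfun k a b (lam i) x₂ * (∏ j, (x₂ - lam j))⁻¹)) := by
    intro x₂ hx₂
    have step1 : Set.EqOn (fun x₁ => Pfun k a b x₁ x₂ / ∏ j, ((x₁ - lam j) * (x₂ - lam j)))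
        (fun x₁ => ∑ i, (x₁ - lam i)⁻¹ *
          (K i * (Pfun k a b x₁ x₂ * (∏ j, (x₂ - lam j))⁻¹)))
        (Metric.sphere 0 R) := by
      intro x₁ hx₁
      have hx1ne := hsphere_ne _ habs x₁ hx₁
      simp only
      rw [Finset.prod_mul_distrib, div_eq_mul_inv, mul_inv,
        partial_fractions hNpos lam hdist x₁ hx1ne, Finset.sum_mul, Finset.mul_sum]
      exact Finset.sum_congr rfl fun i _ => by rw [hKdef]; ring
    rw [circleIntegral.integral_congr hR.le step1, myCircleIntegral_finset_sum]
    · refine Finset.sum_congr rfl fun i _ => ?_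
      have hdg : Differentiable ℂ
          (fun x₁ => K i * (Pfun k a b x₁ x₂ * (∏ j, (x₂ - lam j))⁻¹)) :=
        (((Pfun_diff_left k a b x₂).mul_const _).const_mul _)
      have := hdg.diffContOnCl.circleIntegral_sub_inv_smul (hball i)
      simpa [smul_eq_mul] using this
    · intro i _
      apply ContinuousOn.circleIntegrable hR.le
      apply ContinuousOn.mul
      · refine ContinuousOn.inv₀ (continuous_id.sub continuous_const).continuousOn ?_
        intro x hx; exact sub_ne_zero.mpr (hsphere_ne _ habs x hx i)
      · exact ((((Pfun_diff_left k a b x₂).mul_const _).const_mul _)).continuous.continuousOn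
  -- outer integrand on the big sphere
  have hOuterEq : Set.EqOn
      (fun x₂ => ∮ x₁ in C(0, R), Pfun k a b x₁ x₂ / ∏ j, ((x₁ - lam j) * (x₂ - lam j)))
      (fun x₂ => ∑ i, ∑ j, (x₂ - lam j)⁻¹ *
        ((2 * (Real.pi : ℂ) * Complex.I) * (K i * (K j * Pfun k a b (lam i) x₂))))
      (Metric.sphere 0 (5 * R)) := by
    intro x₂ hx₂
    have hx2ne := hsphere_ne _ habs5 x₂ hx₂
    simp only
    rw [hInner x₂ hx₂]
    refine Finset.sum_congr rfl fun i _ => ?_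
    rw [partial_fractions hNpos lam hdist x₂ hx2ne]
    simp only [Finset.mul_sum]
    exact Finset.sum_congr rfl fun j _ => by rw [hKdef]; ring
  have hcont2 : ∀ (i j : Fin N), ContinuousOn (fun x₂ => (x₂ - lam j)⁻¹ *
      ((2 * (Real.pi : ℂ) * Complex.I) * (K i * (K j * Pfun k a b (lam i) x₂))))
      (Metric.sphere (0 : ℂ) (5 * R)) := by
    intro i j
    apply ContinuousOn.mul
    · refine ContinuousOn.inv₀ (continuous_id.sub continuous_const).continuousOn ?_
      intro x hx; exact sub_ne_zero.mpr (hsphere_ne _ habs5 x hx j)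
    · exact ((((Pfun_diff_right k a b (lam i)).const_mul _).const_mul _).const_mul _).continuous.continuousOn
  have h5R : (0 : ℝ) ≤ 5 * R := by linarith
  rw [circleIntegral.integral_congr h5R hOuterEq]
  rw [myCircleIntegral_finset_sum _ _ _ _ (fun i _ => by
    apply ContinuousOn.circleIntegrable h5R
    exact continuousOn_finset_sum _ (fun j _ => hcont2 i j))]
  have hstep : ∀ i : Fin N, (∮ x₂ in C(0, 5 * R), ∑ j, (x₂ - lam j)⁻¹ *
        ((2 * (Real.pi : ℂ) * Complex.I) * (K i * (K j * Pfun k a b (lam i) x₂))))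
      = ∑ j, (2 * (Real.pi : ℂ) * Complex.I) *
          ((2 * (Real.pi : ℂ) * Complex.I) * (K i * (K j * Pfun k a b (lam i) (lam j)))) := by
    intro i
    rw [myCircleIntegral_finset_sum _ _ _ _ (fun j _ =>
      ContinuousOn.circleIntegrable h5R (hcont2 i j))]
    refine Finset.sum_congr rfl fun j _ => ?_
    have hdg : Differentiable ℂ (fun x₂ =>
        (2 * (Real.pi : ℂ) * Complex.I) * (K i * (K j * Pfun k a b (lam i) x₂))) :=
      (((Pfun_diff_right k a b (lam i)).const_mul _).const_mul _).const_mul _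
    have := hdg.diffContOnCl.circleIntegral_sub_inv_smul (hball5 j)
    simpa [smul_eq_mul] using this
  simp only [hstep]
  -- final algebra
  have hπ := Complex.two_pi_I_ne_zero
  have hKprod : ∀ i : Fin N, (∏ j ∈ Finset.univ.erase i, (lam i - lam j))
      = (-1 : ℂ) ^ (N - 1) * Vfun lam i := by
    intro i
    calc (∏ j ∈ Finset.univ.erase i, (lam i - lam j))
        = ∏ j ∈ Finset.univ.erase i, ((-1) * (lam j - lam i)) :=
          Finset.prod_congr rfl fun j _ => by ring
      _ = (-1 : ℂ) ^ ((Finset.univ.erase i).card) *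
            ∏ j ∈ Finset.univ.erase i, (lam j - lam i) := by
          rw [Finset.prod_mul_distrib, Finset.prod_const]
      _ = (-1 : ℂ) ^ (N - 1) * Vfun lam i := by
          rw [Finset.card_erase_of_mem (Finset.mem_univ i), Finset.card_univ, Fintype.card_fin]
          rfl
  have ha : ((-1 : ℂ) ^ (N - 1)) * ((-1 : ℂ) ^ (N - 1)) = 1 := by
    rw [← pow_add]; exact Even.neg_one_pow ⟨N - 1, rfl⟩
  have hKK : ∀ i j : Fin N, K i * K j = (Vfun lam i * Vfun lam j)⁻¹ := by
    intro i j
    rw [hKdef]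
    simp only
    rw [hKprod i, hKprod j, ← mul_inv, mul_mul_mul_comm, ha, one_mul]
  calc (1 / (2 * (Real.pi : ℂ) * Complex.I)) ^ 2 *
      ∑ i, ∑ j, (2 * (Real.pi : ℂ) * Complex.I) *
        ((2 * (Real.pi : ℂ) * Complex.I) * (K i * (K j * Pfun k a b (lam i) (lam j))))
      = ∑ i, ∑ j, K i * K j * Pfun k a b (lam i) (lam j) := by
        rw [Finset.mul_sum]
        refine Finset.sum_congr rfl fun i _ => ?_
        rw [Finset.mul_sum]
        refine Finset.sum_congr rfl fun j _ => ?_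
        field_simp
    _ = ∑ i, ∑ j ∈ Finset.univ.erase i,
          Pfun k a b (lam i) (lam j) / (Vfun lam i * Vfun lam j) := by
        refine Finset.sum_congr rfl fun i _ => ?_
        rw [← Finset.add_sum_erase _ _ (Finset.mem_univ i)]
        have hdiag : K i * K i * Pfun k a b (lam i) (lam i) = 0 := by
          simp [Pfun, sub_self]
        rw [hdiag, zero_add]
        refine Finset.sum_congr rfl fun j _ => ?_
        rw [div_eq_mul_inv, ← hKK i j]
        ring
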